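/- Let θ : G → ℂ be a function with |θ(g)| = 1 for all g, and let (ψ_i)_{i ∈ ι} be an orthonormal family of vectors satisfying π(g) ψ_i = θ(g) • ψ_i for every g ∈ G and every i (the same phase function for all i). Let E be an n×n complex matrix such that Π_G(E) = c • 1 for some scalar c ∈ ℂ. Then for all indices i, j: ⟨ψ_i, E ψ_j⟩ = c if i = j and ⟨ψ_i, E ψ_j⟩ = 0 if i ≠ j. In other words, the span of the ψ_i is a quantum error-detecting code for E. -/

import Mathlib

/-- The symmetrization map `Π_G` associated with a unitary representation
`π : G →* U(n)`: `Π_G(S) = (1/|G|) ∑ g, π(g) S π(g)*`. -/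
noncomputable def symG {G : Type*} [Group G] [Fintype G] {n : ℕ}
    (π : G →* Matrix.unitaryGroup (Fin n) ℂ)
    (S : Matrix (Fin n) (Fin n) ℂ) : Matrix (Fin n) (Fin n) ℂ :=
  (Fintype.card G : ℂ)⁻¹ • ∑ g : G,
    (π g : Matrix (Fin n) (Fin n) ℂ) * S * star (π g : Matrix (Fin n) (Fin n) ℂ)

/-- If an orthonormal family `(ψ i)` transforms under `G` with a common unimodular
phase function and `Π_G(E) = c • 1`, then `⟨ψ i, E ψ j⟩ = c` for `i = j` and `0`
otherwise: the span of the `ψ i` is a quantum error-detecting code for `E`. -/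
theorem error_detection_of_symG_scalar {G : Type*} [Group G] [Fintype G] {n : ℕ}
    (hn : 0 < n) (π : G →* Matrix.unitaryGroup (Fin n) ℂ)
    {ι : Type*} [DecidableEq ι] (θ : G → ℂ) (hθ : ∀ g, ‖θ g‖ = 1)
    (ψ : ι → EuclideanSpace ℂ (Fin n)) (hortho : Orthonormal ℂ ψ)
    (heig : ∀ (g : G) (i : ι),
      Matrix.toEuclideanLin (π g : Matrix (Fin n) (Fin n) ℂ) (ψ i) = θ g • ψ i)
    (E : Matrix (Fin n) (Fin n) ℂ) (c : ℂ)
    (hE : symG π E = c • (1 : Matrix (Fin n) (Fin n) ℂ)) :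
    ∀ i j : ι, (inner ℂ (ψ i) (Matrix.toEuclideanLin E (ψ j)) : ℂ)
      = if i = j then c else 0 := by
  intro i j
  have hstar : ∀ g : G, star ((π g : Matrix (Fin n) (Fin n) ℂ))
      = ((π g⁻¹ : Matrix (Fin n) (Fin n) ℂ)) := by
    intro g
    rw [map_inv]
    rfl
  have hmul : ∀ (A B : Matrix (Fin n) (Fin n) ℂ) (x : EuclideanSpace ℂ (Fin n)),
      Matrix.toEuclideanLin (A * B) x
        = Matrix.toEuclideanLin A (Matrix.toEuclideanLin B x) := by
    intro A B x
    simp only [Matrix.toEuclideanLin_apply, Equiv.apply_symm_apply, Matrix.mulVec_mulVec]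
  -- each summand gives the same inner product
  have key : ∀ g : G,
      (inner ℂ (ψ i) (Matrix.toEuclideanLin
        ((π g : Matrix (Fin n) (Fin n) ℂ) * E * star (π g : Matrix (Fin n) (Fin n) ℂ)) (ψ j)) : ℂ)
      = inner ℂ (ψ i) (Matrix.toEuclideanLin E (ψ j)) := by
    intro g
    rw [hstar, hmul, hmul, heig g⁻¹ j]
    have hadj : (inner ℂ (ψ i)
        (Matrix.toEuclideanLin (π g : Matrix (Fin n) (Fin n) ℂ)
          (Matrix.toEuclideanLin E (θ g⁻¹ • ψ j))) : ℂ)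
        = inner ℂ (Matrix.toEuclideanLin (Matrix.conjTranspose ((π g : Matrix (Fin n) (Fin n) ℂ))) (ψ i))
            (Matrix.toEuclideanLin E (θ g⁻¹ • ψ j)) := by
      rw [Matrix.toEuclideanLin_conjTranspose_eq_adjoint, LinearMap.adjoint_inner_left]
    rw [hadj]
    have : Matrix.conjTranspose ((π g : Matrix (Fin n) (Fin n) ℂ))
        = ((π g⁻¹ : Matrix (Fin n) (Fin n) ℂ)) := hstar g
    rw [this, heig g⁻¹ i, map_smul, inner_smul_left, inner_smul_right]
    have hone : (starRingEnd ℂ) (θ g⁻¹) * θ g⁻¹ = 1 := by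
      rw [mul_comm, Complex.mul_conj, Complex.normSq_eq_norm_sq, hθ]
      norm_num
    rw [← mul_assoc, hone, one_mul]
  have hsum : (inner ℂ (ψ i) (Matrix.toEuclideanLin (symG π E) (ψ j)) : ℂ)
      = inner ℂ (ψ i) (Matrix.toEuclideanLin E (ψ j)) := by
    unfold symG
    rw [map_smul, map_sum]
    simp only [LinearMap.smul_apply, LinearMap.sum_apply] at *
    rw [inner_smul_right, inner_sum]
    rw [Finset.sum_congr rfl fun g _ => key g]
    rw [Finset.sum_const, Finset.card_univ, nsmul_eq_mul, ← mul_assoc,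
      inv_mul_cancel₀ (by exact_mod_cast Fintype.card_ne_zero), one_mul]
  rw [← hsum, hE, map_smul]
  simp only [LinearMap.smul_apply, inner_smul_right]
  have h1 : Matrix.toEuclideanLin (1 : Matrix (Fin n) (Fin n) ℂ) (ψ j) = ψ j := by
    simp [Matrix.toEuclideanLin_apply, Matrix.one_mulVec]
  rw [h1, orthonormal_iff_ite.mp hortho i j]
  simp
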